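/- arXiv:1803.02453 — 5 statements merged into one kernel-verified Lean document; each statement's English description precedes it below -/
import Mathlib

section
/- (Approximate complementary slackness) If (Q̂, λ̂) is a ν-approximate saddle point of L(Q,λ) = err̂(Q) + Σ_k λ_k(γ̂_k(Q) − ĉ_k) over Δ × Λ with Λ = {λ ∈ ℝ_+^K : ‖λ‖₁ ≤ B}, then Σ_k λ̂_k(γ̂_k(Q̂) − ĉ_k) ≥ B·max_k (γ̂_k(Q̂) − ĉ_k)₊ − ν, where x₊ = max(x, 0). -/
/-- approximate complementary slackness: if `(Q̂, λ̂)` is a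
ν-approximate saddle point of `L(Q,λ) = err̂(Q) + ∑_k λ_k (γ̂_k(Q) − ĉ_k)` over
`Δ × {λ ∈ ℝ₊^K : ‖λ‖₁ ≤ B}`, then
`∑_k λ̂_k (γ̂_k(Q̂) − ĉ_k) ≥ B·max_k (γ̂_k(Q̂) − ĉ_k)₊ − ν`. -/
theorem approximate_complementary_slackness
    (H K : Type) [Fintype H] [Fintype K] [Nonempty K]
    (err : (H → ℝ) → ℝ) (gam : (H → ℝ) → K → ℝ) (c : K → ℝ)
    (B ν : ℝ) (hB : 0 < B) (hν : 0 ≤ ν)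
    (L : (H → ℝ) → (K → ℝ) → ℝ)
    (hL : ∀ Q lam, L Q lam = err Q + ∑ k, lam k * (gam Q k - c k))
    (Δ : Set (H → ℝ)) (hΔ : Δ = stdSimplex ℝ H)
    (Λ : Set (K → ℝ)) (hΛ : Λ = {lam | (∀ k, 0 ≤ lam k) ∧ ∑ k, |lam k| ≤ B})
    (Qh : H → ℝ) (lamh : K → ℝ) (hQh : Qh ∈ Δ) (hlamh : lamh ∈ Λ)
    (hsaddle1 : ∀ Q ∈ Δ, L Qh lamh ≤ L Q lamh + ν)
    (hsaddle2 : ∀ lam ∈ Λ, L Qh lam - ν ≤ L Qh lamh) :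
    B * (⨆ k : K, max (gam Qh k - c k) 0) - ν ≤
      ∑ k, lamh k * (gam Qh k - c k) := by
  classical
  set f : K → ℝ := fun k => max (gam Qh k - c k) 0 with hf
  obtain ⟨k0, hk0⟩ := Finite.exists_max f
  have hsup : (⨆ k : K, f k) = f k0 := by
    apply le_antisymm
    · exact ciSup_le hk0
    · exact le_ciSup (Finite.bddAbove_range f) k0
  rw [hsup]
  rcases le_or_gt (gam Qh k0 - c k0) 0 with h0 | h0
  · have hfz : f k0 = 0 := max_eq_right h0
    rw [hfz, mul_zero, zero_sub]
    have hmem : (0 : K → ℝ) ∈ Λ := by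
      rw [hΛ]
      constructor
      · intro k; simp
      · simp [le_of_lt hB]
    have := hsaddle2 0 hmem
    rw [hL, hL] at this
    simp only [Pi.zero_apply, zero_mul, Finset.sum_const_zero, add_zero] at this
    linarith
  · have hfk : f k0 = gam Qh k0 - c k0 := max_eq_left (le_of_lt h0)
    set lam : K → ℝ := fun k => if k = k0 then B else 0 with hlam
    have hmem : lam ∈ Λ := by
      rw [hΛ]
      constructor
      · intro k; by_cases h : k = k0 <;> simp [hlam, h, le_of_lt hB]
      · have : ∀ k, |lam k| = if k = k0 then B else 0 := by
          intro k; by_cases h : k = k0 <;> simp [hlam, h, abs_of_pos hB]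
        simp [this]
    have := hsaddle2 lam hmem
    rw [hL, hL] at this
    have hsum : ∑ k, lam k * (gam Qh k - c k) = B * (gam Qh k0 - c k0) := by
      rw [Finset.sum_eq_single k0]
      · simp [hlam]
      · intro b _ hb; simp [hlam, hb]
      · intro h; exact absurd (Finset.mem_univ k0) h
    rw [hsum] at this
    rw [hfk]
    linarith
end

section
/- (Empirical error bound) If (Q̂, λ̂) is a ν-approximate saddle point of the Lagrangian L(Q,λ) = err̂(Q) + λᵀ(γ̂(Q) − ĉ) over Δ × {λ ∈ ℝ_+^K : ‖λ‖₁ ≤ B}, then for any Q ∈ Δ satisfying the empirical fairness constraints γ̂(Q) ≤ ĉ componentwise, err̂(Q̂) ≤ err̂(Q) + 2ν. -/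
/-- empirical error bound: if `(Q̂, λ̂)` is a ν-approximate saddle
point of the Lagrangian, then `err̂(Q̂) ≤ err̂(Q) + 2ν` for any `Q ∈ Δ` with
`γ̂(Q) ≤ ĉ` componentwise. -/
theorem empirical_error_bound
    (H K : Type) [Fintype H] [Fintype K]
    (err : (H → ℝ) → ℝ) (gam : (H → ℝ) → K → ℝ) (c : K → ℝ)
    (B ν : ℝ) (hB : 0 < B) (hν : 0 ≤ ν)
    (L : (H → ℝ) → (K → ℝ) → ℝ)
    (hL : ∀ Q lam, L Q lam = err Q + ∑ k, lam k * (gam Q k - c k))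
    (Δ : Set (H → ℝ)) (hΔ : Δ = stdSimplex ℝ H)
    (Λ : Set (K → ℝ)) (hΛ : Λ = {lam | (∀ k, 0 ≤ lam k) ∧ ∑ k, |lam k| ≤ B})
    (Qh : H → ℝ) (lamh : K → ℝ) (hQh : Qh ∈ Δ) (hlamh : lamh ∈ Λ)
    (hsaddle1 : ∀ Q ∈ Δ, L Qh lamh ≤ L Q lamh + ν)
    (hsaddle2 : ∀ lam ∈ Λ, L Qh lam - ν ≤ L Qh lamh)
    (Q : H → ℝ) (hQ : Q ∈ Δ) (hfeas : ∀ k, gam Q k ≤ c k) :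
    err Qh ≤ err Q + 2 * ν := by
  have h0 : (fun _ : K => (0:ℝ)) ∈ Λ := by
    rw [hΛ]
    exact ⟨fun k => le_rfl, by simp [le_of_lt hB]⟩
  have h1 := hsaddle2 _ h0
  simp only [hL] at h1
  simp only [zero_mul, Finset.sum_const_zero, add_zero] at h1
  have h2 := hsaddle1 Q hQ
  simp only [hL] at h2
  have hlam0 : ∀ k, 0 ≤ lamh k := by
    rw [hΛ] at hlamh; exact hlamh.1
  have h3 : (∑ k, lamh k * (gam Q k - c k)) ≤ 0 := by
    apply Finset.sum_nonpos
    intro k _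
    exact mul_nonpos_of_nonneg_of_nonpos (hlam0 k) (by linarith [hfeas k])
  linarith
end

section
/- (Empirical fairness violation) Suppose the empirical fairness constraints γ̂(Q) ≤ ĉ are feasible for some Q ∈ Δ, and (Q̂, λ̂) is a ν-approximate saddle point of L(Q,λ) = err̂(Q) + λᵀ(γ̂(Q) − ĉ) over Δ × {λ ∈ ℝ_+^K : ‖λ‖₁ ≤ B}, where err̂ takes values in [0,1]. Then max_k (γ̂_k(Q̂) − ĉ_k) ≤ (1 + 2ν)/B. -/
/-- empirical fairness violation: if the empirical fairness
constraints are feasible and `(Q̂, λ̂)` is a ν-approximate saddle point of the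
Lagrangian, with `err̂` valued in `[0,1]`, then
`max_k (γ̂_k(Q̂) − ĉ_k) ≤ (1 + 2ν)/B`. -/
theorem empirical_fairness_violation
    (H K : Type) [Fintype H] [Fintype K] [Nonempty K]
    (err : (H → ℝ) → ℝ) (gam : (H → ℝ) → K → ℝ) (c : K → ℝ)
    (B ν : ℝ) (hB : 0 < B) (hν : 0 ≤ ν)
    (L : (H → ℝ) → (K → ℝ) → ℝ)
    (hL : ∀ Q lam, L Q lam = err Q + ∑ k, lam k * (gam Q k - c k))
    (Δ : Set (H → ℝ)) (hΔ : Δ = stdSimplex ℝ H)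
    (Λ : Set (K → ℝ)) (hΛ : Λ = {lam | (∀ k, 0 ≤ lam k) ∧ ∑ k, |lam k| ≤ B})
    (herr01 : ∀ Q ∈ Δ, err Q ∈ Set.Icc (0 : ℝ) 1)
    (hfeas : ∃ Q ∈ Δ, ∀ k, gam Q k ≤ c k)
    (Qh : H → ℝ) (lamh : K → ℝ) (hQh : Qh ∈ Δ) (hlamh : lamh ∈ Λ)
    (hsaddle1 : ∀ Q ∈ Δ, L Qh lamh ≤ L Q lamh + ν)
    (hsaddle2 : ∀ lam ∈ Λ, L Qh lam - ν ≤ L Qh lamh) :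
    (⨆ k : K, (gam Qh k - c k)) ≤ (1 + 2 * ν) / B := by
  classical
  obtain ⟨Qs, hQs, hQsc⟩ := hfeas
  rw [hΛ] at hlamh
  -- upper bound on L Qh lamh
  have hupper : L Qh lamh ≤ 1 + ν := by
    have h1 := hsaddle1 Qs hQs
    have h2 : L Qs lamh ≤ 1 := by
      rw [hL]
      have hsum : (∑ k, lamh k * (gam Qs k - c k)) ≤ 0 := by
        apply Finset.sum_nonpos
        intro k _
        exact mul_nonpos_of_nonneg_of_nonpos (hlamh.1 k) (by linarith [hQsc k])
      have := (herr01 Qs hQs).2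
      linarith
    linarith
  apply ciSup_le
  intro k0
  set lam : K → ℝ := fun k => if k = k0 then B else 0 with hlam
  have hlamΛ : lam ∈ Λ := by
    rw [hΛ]
    constructor
    · intro k; by_cases h : k = k0 <;> simp [hlam, h, hB.le]
    · have : ∀ k, |lam k| = if k = k0 then B else 0 := by
        intro k; by_cases h : k = k0 <;> simp [hlam, h, abs_of_nonneg hB.le]
      simp only [this, Finset.sum_ite_eq', Finset.mem_univ, if_true]; exact le_refl B
  have h3 := hsaddle2 lam hlamΛ
  have hLval : L Qh lam = err Qh + B * (gam Qh k0 - c k0) := by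
    rw [hL]
    congr 1
    have : ∀ k, lam k * (gam Qh k - c k) = if k = k0 then B * (gam Qh k0 - c k0) else 0 := by
      intro k; by_cases h : k = k0 <;> simp [hlam, h]
    simp only [this, Finset.sum_ite_eq', Finset.mem_univ, if_true]
  have herrQh := (herr01 Qh hQh).1
  rw [le_div_iff₀ hB]
  rw [hLval] at h3
  linarith [mul_comm (gam Qh k0 - c k0) B]
end

section
/- (Generalization of the saddle-point solution) Let (Q̂, λ̂) be a ν-approximate saddle point of L(Q,λ) = err̂(Q) + λᵀ(γ̂(Q) − ĉ) over Δ × {λ ∈ ℝ_+^K : ‖λ‖₁ ≤ B}, with ĉ_k = c_k + ε_k. Assume (i) |err̂(Q) − err(Q)| ≤ ε₀ for all Q ∈ Δ, (ii) |γ̂_k(Q) − γ_k(Q)| ≤ ε_k for all k and all Q ∈ Δ, (iii) err̂ takes values in [0,1], and (iv) Q* ∈ Δ satisfies γ(Q*) ≤ c. Then err(Q̂) ≤ err(Q*) + 2ν + 2ε₀, and γ_k(Q̂) ≤ c_k + (1+2ν)/B + 2ε_k for all k. -/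
/-- generalization of the saddle-point solution: under uniform
deviation bounds for the error and the constraints, a ν-approximate saddle
point `(Q̂, λ̂)` of the empirical Lagrangian with `ĉ = c + ε` satisfies
`err(Q̂) ≤ err(Q*) + 2ν + 2ε₀` and `γ_k(Q̂) ≤ c_k + (1+2ν)/B + 2ε_k` for all `k`,
for any `Q*` that is feasible for the true constraints. -/
theorem generalization_of_saddle_point
    (H K : Type) [Fintype H] [Fintype K]
    (errhat err : (H → ℝ) → ℝ)
    (gamhat gam : (H → ℝ) → K → ℝ)
    (c : K → ℝ) (ε0 : ℝ) (ε : K → ℝ) (chat : K → ℝ)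
    (hchat : ∀ k, chat k = c k + ε k)
    (hε0 : 0 ≤ ε0) (hε : ∀ k, 0 ≤ ε k)
    (B ν : ℝ) (hB : 0 < B) (hν : 0 ≤ ν)
    (L : (H → ℝ) → (K → ℝ) → ℝ)
    (hL : ∀ Q lam, L Q lam = errhat Q + ∑ k, lam k * (gamhat Q k - chat k))
    (Δ : Set (H → ℝ)) (hΔ : Δ = stdSimplex ℝ H)
    (Λ : Set (K → ℝ)) (hΛ : Λ = {lam | (∀ k, 0 ≤ lam k) ∧ ∑ k, |lam k| ≤ B})
    (herrdev : ∀ Q ∈ Δ, |errhat Q - err Q| ≤ ε0)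
    (hgamdev : ∀ Q ∈ Δ, ∀ k, |gamhat Q k - gam Q k| ≤ ε k)
    (herr01 : ∀ Q ∈ Δ, errhat Q ∈ Set.Icc (0 : ℝ) 1)
    (Qstar : H → ℝ) (hQstar : Qstar ∈ Δ) (hfeas : ∀ k, gam Qstar k ≤ c k)
    (Qh : H → ℝ) (lamh : K → ℝ) (hQh : Qh ∈ Δ) (hlamh : lamh ∈ Λ)
    (hsaddle1 : ∀ Q ∈ Δ, L Qh lamh ≤ L Q lamh + ν)
    (hsaddle2 : ∀ lam ∈ Λ, L Qh lam - ν ≤ L Qh lamh) :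
    err Qh ≤ err Qstar + 2 * ν + 2 * ε0 ∧
      ∀ k, gam Qh k ≤ c k + (1 + 2 * ν) / B + 2 * ε k := by
  classical
  -- basic deviation facts
  have hgamQs : ∀ k, gamhat Qstar k ≤ chat k := by
    intro k
    have := abs_le.1 (hgamdev Qstar hQstar k)
    have := this.2
    rw [hchat k]; linarith [hfeas k]
  have hlam := hΛ ▸ hlamh
  have hlampos : ∀ k, 0 ≤ lamh k := hlam.1
  -- L(Qh, lamh) ≤ errhat Qstar + ν
  have hupper : L Qh lamh ≤ errhat Qstar + ν := by
    have h1 := hsaddle1 Qstar hQstar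
    have h2 : L Qstar lamh ≤ errhat Qstar := by
      rw [hL]
      have : ∑ k, lamh k * (gamhat Qstar k - chat k) ≤ 0 := by
        apply Finset.sum_nonpos
        intro k _
        exact mul_nonpos_of_nonneg_of_nonpos (hlampos k) (by linarith [hgamQs k])
      linarith
    linarith
  -- zero lambda
  have hzeroΛ : (0 : K → ℝ) ∈ Λ := by
    rw [hΛ]
    refine ⟨fun k => le_refl 0, ?_⟩
    simp [hB.le]
  have hlow : errhat Qh - ν ≤ L Qh lamh := by
    have := hsaddle2 0 hzeroΛ
    rw [hL] at this
    simpa using this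
  have herrQhd := abs_le.1 (herrdev Qh hQh)
  have herrQsd := abs_le.1 (herrdev Qstar hQstar)
  constructor
  · -- error bound
    linarith [herrQhd.2, herrQsd.1]
  · intro k
    -- lambda = B * e_k
    set lamk : K → ℝ := fun j => if j = k then B else 0 with hlamk
    have hmem : lamk ∈ Λ := by
      rw [hΛ]
      constructor
      · intro j; by_cases h : j = k <;> simp [hlamk, h, hB.le]
      · have : ∑ j, |lamk j| = B := by
          rw [Finset.sum_eq_single k]
          · simp [hlamk, abs_of_nonneg hB.le]
          · intro j _ hj; simp [hlamk, hj]
          · intro h; exact absurd (Finset.mem_univ k) h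
        linarith
    have hLk : L Qh lamk = errhat Qh + B * (gamhat Qh k - chat k) := by
      rw [hL]
      congr 1
      rw [Finset.sum_eq_single k]
      · simp [hlamk]
      · intro j _ hj; simp [hlamk, hj]
      · intro h; exact absurd (Finset.mem_univ k) h
    have h2 := hsaddle2 lamk hmem
    rw [hLk] at h2
    have herr0 : 0 ≤ errhat Qh := (herr01 Qh hQh).1
    have herr1 : errhat Qstar ≤ 1 := (herr01 Qstar hQstar).2
    have hb : B * (gamhat Qh k - chat k) ≤ 1 + 2 * ν := by linarith
    have : gamhat Qh k - chat k ≤ (1 + 2 * ν) / B := by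
      rw [le_div_iff₀ hB]; linarith [hb]
    have hgd := abs_le.1 (hgamdev Qh hQh k)
    rw [hchat k] at this
    linarith [hgd.1]
end

section
/- (Costs reproduce the Lagrangian for deterministic classifiers) Over an empirical sample {(Xᵢ,Aᵢ,Yᵢ)}ᵢ₌₁ⁿ, define p_j = (1/n)|{i : (Xᵢ,Aᵢ,Yᵢ) ∈ E_j}| > 0, μ̂_j(h) = average of g_j(Xᵢ,Aᵢ,Yᵢ,h(Xᵢ)) over i with (Xᵢ,Aᵢ,Yᵢ) ∈ E_j, and err̂(h) = (1/n)Σᵢ 1{h(Xᵢ) ≠ Yᵢ}. Let Cᵢ^ŷ = 1{Yᵢ ≠ ŷ} + Σ_{k,j} (M_{k,j} λ_k / p_j) g_j(Xᵢ,Aᵢ,Yᵢ,ŷ)·1{(Xᵢ,Aᵢ,Yᵢ) ∈ E_j} for ŷ ∈ {0,1}. Then for every classifier h, (1/n)Σᵢ [h(Xᵢ)Cᵢ¹ + (1−h(Xᵢ))Cᵢ⁰] = err̂(h) + Σ_{k,j} M_{k,j} λ_k μ̂_j(h) = L(h,λ) + λᵀĉ. Consequently any minimizer of the cost-sensitive objective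 over h ∈ H minimizes L(·,λ) over H. -/
open Finset

/-- costs reproduce the Lagrangian for deterministic
classifiers: the cost-sensitive costs `Cᵢ^ŷ` built from the Lagrange
multipliers satisfy
`(1/n) ∑ᵢ [h(Xᵢ)Cᵢ¹ + (1−h(Xᵢ))Cᵢ⁰] = err̂(h) + ∑_{k,j} M_{k,j} λ_k μ̂_j(h)
 = L(h,λ) + λᵀĉ`, so any minimizer of the cost-sensitive objective over `H`
minimizes `L(·,λ)` over `H`. -/
theorem costs_reproduce_lagrangian
    (𝒳 𝒜 K J : Type) [Fintype K] [Fintype J]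
    (n : ℕ) (hn : 0 < n)
    (Xs : Fin n → 𝒳) (As : Fin n → 𝒜) (Ys : Fin n → Bool)
    (E : J → Set (𝒳 × 𝒜 × Bool)) [∀ j, DecidablePred (· ∈ E j)]
    (g : J → 𝒳 → 𝒜 → Bool → Bool → ℝ)
    (hg01 : ∀ j x a y yh, g j x a y yh ∈ Set.Icc (0 : ℝ) 1)
    (M : K → J → ℝ) (lam : K → ℝ) (hlam : ∀ k, 0 ≤ lam k) (chat : K → ℝ)
    (p : J → ℝ)
    (hp : ∀ j, p j = ((univ.filter fun i => (Xs i, As i, Ys i) ∈ E j).card : ℝ) / n)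
    (hppos : ∀ j, 0 < p j)
    (muhat : J → (𝒳 → Bool) → ℝ)
    (hmuhat : ∀ j h, muhat j h =
      (∑ i ∈ univ.filter fun i => (Xs i, As i, Ys i) ∈ E j,
          g j (Xs i) (As i) (Ys i) (h (Xs i))) /
        ((univ.filter fun i => (Xs i, As i, Ys i) ∈ E j).card : ℝ))
    (errhat : (𝒳 → Bool) → ℝ)
    (herrhat : ∀ h, errhat h = (∑ i, if h (Xs i) ≠ Ys i then (1 : ℝ) else 0) / n)
    (C : Fin n → Bool → ℝ)
    (hC : ∀ i yh, C i yh = (if Ys i ≠ yh then (1 : ℝ) else 0) +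
      ∑ k, ∑ j, (M k j * lam k / p j) * g j (Xs i) (As i) (Ys i) yh *
        (if (Xs i, As i, Ys i) ∈ E j then 1 else 0))
    (cost : (𝒳 → Bool) → ℝ)
    (hcost : ∀ h, cost h = (∑ i, ((if h (Xs i) then (1 : ℝ) else 0) * C i true +
      (1 - if h (Xs i) then (1 : ℝ) else 0) * C i false)) / n)
    (L : (𝒳 → Bool) → (K → ℝ) → ℝ)
    (hLdef : ∀ h l, L h l = errhat h + ∑ k, l k * ((∑ j, M k j * muhat j h) - chat k))
    (H : Set (𝒳 → Bool)) :
    (∀ h, cost h = errhat h + ∑ k, ∑ j, M k j * lam k * muhat j h) ∧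
      (∀ h, cost h = L h lam + ∑ k, lam k * chat k) ∧
      (∀ h0 ∈ H, (∀ h ∈ H, cost h0 ≤ cost h) → ∀ h ∈ H, L h0 lam ≤ L h lam) := by
  have hn' : (0:ℝ) < (n:ℝ) := by exact_mod_cast hn
  have hcard : ∀ j : J, (0:ℝ) < ((univ.filter fun i => (Xs i, As i, Ys i) ∈ E j).card : ℝ) := by
    intro j
    have h0 := hppos j
    rw [hp j] at h0
    by_contra hle
    push_neg at hle
    have hz : ((univ.filter fun i => (Xs i, As i, Ys i) ∈ E j).card : ℝ) = 0 :=
      le_antisymm hle (Nat.cast_nonneg _)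
    rw [hz, zero_div] at h0
    exact lt_irrefl 0 h0
  have key : ∀ h, cost h = errhat h + ∑ k, ∑ j, M k j * lam k * muhat j h := by
    intro h
    have h1 : ∀ i ∈ (univ : Finset (Fin n)), (if h (Xs i) then (1 : ℝ) else 0) * C i true +
        (1 - if h (Xs i) then (1 : ℝ) else 0) * C i false = C i (h (Xs i)) := by
      intro i _; by_cases hi : h (Xs i) <;> simp [hi]
    rw [hcost h, Finset.sum_congr rfl h1]
    simp only [hC]
    rw [Finset.sum_add_distrib, add_div]
    congr 1
    · rw [herrhat h]
      congr 1
      apply Finset.sum_congr rfl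
      intro i _
      rcases eq_or_ne (h (Xs i)) (Ys i) with hi | hi
      · simp [hi]
      · simp [hi, Ne.symm hi]
    · have swap : ∑ i : Fin n, ∑ k : K, ∑ j : J,
          (M k j * lam k / p j) * g j (Xs i) (As i) (Ys i) (h (Xs i)) *
            (if (Xs i, As i, Ys i) ∈ E j then 1 else 0)
          = ∑ k : K, ∑ j : J, ∑ i : Fin n,
          (M k j * lam k / p j) * g j (Xs i) (As i) (Ys i) (h (Xs i)) *
            (if (Xs i, As i, Ys i) ∈ E j then 1 else 0) := by
        rw [Finset.sum_comm]
        exact Finset.sum_congr rfl fun k _ => Finset.sum_comm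
      rw [swap, Finset.sum_div]
      apply Finset.sum_congr rfl
      intro k _
      rw [Finset.sum_div]
      apply Finset.sum_congr rfl
      intro j _
      have hsum : ∑ i : Fin n, (M k j * lam k / p j) * g j (Xs i) (As i) (Ys i) (h (Xs i)) *
          (if (Xs i, As i, Ys i) ∈ E j then 1 else 0)
          = (M k j * lam k / p j) * ∑ i ∈ univ.filter fun i => (Xs i, As i, Ys i) ∈ E j,
              g j (Xs i) (As i) (Ys i) (h (Xs i)) := by
        calc ∑ i : Fin n, (M k j * lam k / p j) * g j (Xs i) (As i) (Ys i) (h (Xs i)) *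
              (if (Xs i, As i, Ys i) ∈ E j then 1 else 0)
            = ∑ i ∈ univ.filter fun i => (Xs i, As i, Ys i) ∈ E j,
                (M k j * lam k / p j) * g j (Xs i) (As i) (Ys i) (h (Xs i)) *
                  (if (Xs i, As i, Ys i) ∈ E j then 1 else 0) := by
              refine (Finset.sum_filter_of_ne ?_).symm
              intro i _ hne
              by_contra hni
              simp [hni] at hne
          _ = ∑ i ∈ univ.filter fun i => (Xs i, As i, Ys i) ∈ E j,
                (M k j * lam k / p j) * g j (Xs i) (As i) (Ys i) (h (Xs i)) := by
              apply Finset.sum_congr rfl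
              intro i hi
              simp only [Finset.mem_filter] at hi
              simp [hi.2]
          _ = (M k j * lam k / p j) * ∑ i ∈ univ.filter fun i => (Xs i, As i, Ys i) ∈ E j,
                g j (Xs i) (As i) (Ys i) (h (Xs i)) := by
              rw [Finset.mul_sum]
      rw [hsum, hmuhat j h, hp j]
      have hc := hcard j
      field_simp
  have key2 : ∀ h, cost h = L h lam + ∑ k, lam k * chat k := by
    intro h
    rw [key h, hLdef]
    have e : ∀ k : K, lam k * ((∑ j, M k j * muhat j h) - chat k) =
        (∑ j, M k j * lam k * muhat j h) - lam k * chat k := by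
      intro k
      rw [mul_sub, Finset.mul_sum]
      congr 1
      apply Finset.sum_congr rfl
      intro j _
      ring
    simp only [e, Finset.sum_sub_distrib]
    ring
  refine ⟨key, key2, ?_⟩
  intro h0 h0H hmin h hH
  have := hmin h hH
  rw [key2 h0, key2 h] at this
  linarith
end
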